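/- Let a > 0. For every real x ≠ 0, 1/( x · sinh(πx/a) ) = (a/(2π)) ∫_0^∞ u^{−2} e^{−x²/(2u)} ( Σ_{n∈ℤ} (−1)^n e^{−n²a²/(2u)} ) du. (The symmetric part of the Meixner Lévy density is the Gaussian mixture of the explicit time-change Lévy density (a/√(2πu³)) Σ_{n∈ℤ}(−1)^n e^{−n²a²/(2u)} · (2πu)^{−1/2}; the series Σ_{n∈ℤ}(−1)^n e^{−n²a²/(2u)} equals P(M₁^{(3)} ≥ (π/a)√u), the tail of the maximum of a standard Bessel(3) bridge-type hitting time.) -/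

import Mathlib

open MeasureTheory Real Set

section AuxA
open Filter Topology

private noncomputable def mixG (c : ℝ) (u : ℝ) : ℝ :=
  if u ≤ 0 then 0 else (2 / c) * Real.exp (-c / (2 * u))

private lemma mixG_deriv {c : ℝ} (hc : 0 < c) {u : ℝ} (hu : 0 < u) :
    HasDerivAt (mixG c) ((u ^ 2)⁻¹ * Real.exp (-c / (2 * u))) u := by
  have h1 : HasDerivAt (fun v : ℝ => (2 / c) * Real.exp (-c / (2 * v)))
      ((u ^ 2)⁻¹ * Real.exp (-c / (2 * u))) u := by
    have hinner : HasDerivAt (fun v : ℝ => -c / (2 * v)) ((c / 2) * (u ^ 2)⁻¹) u := by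
      have h := (hasDerivAt_inv hu.ne').const_mul (-c / 2)
      have heq : (fun v : ℝ => -c / 2 * v⁻¹) = fun v : ℝ => -c / (2 * v) := by
        funext v; ring
      rw [heq] at h
      exact h.congr_deriv (by ring)
    have := (hinner.exp).const_mul (2 / c)
    exact this.congr_deriv (by field_simp)
  refine h1.congr_of_eventuallyEq ?_
  filter_upwards [Ioi_mem_nhds hu] with v hv
  simp [mixG, not_le.mpr (mem_Ioi.mp hv)]

private lemma mixG_tendsto {c : ℝ} (hc : 0 < c) :
    Tendsto (mixG c) atTop (𝓝 (2 / c)) := by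
  have h1 : Tendsto (fun u : ℝ => -c / (2 * u)) atTop (𝓝 0) := by
    have := tendsto_inv_atTop_zero.const_mul (-c / 2)
    simpa [div_eq_mul_inv, mul_comm, mul_assoc, mul_left_comm] using this
  have h2 : Tendsto (fun u : ℝ => (2 / c) * Real.exp (-c / (2 * u))) atTop (𝓝 (2 / c)) := by
    have := (Real.continuous_exp.tendsto 0).comp h1
    simpa using this.const_mul (2 / c)
  refine h2.congr' ?_
  filter_upwards [Ioi_mem_atTop (0:ℝ)] with u hu
  simp [mixG, not_le.mpr (mem_Ioi.mp hu)]

private lemma mixG_cont {c : ℝ} (hc : 0 < c) :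
    ContinuousWithinAt (mixG c) (Ici 0) 0 := by
  have h0 : mixG c 0 = 0 := by simp [mixG]
  rw [ContinuousWithinAt, h0]
  rw [← Set.Ioi_insert, nhdsWithin_insert]
  rw [tendsto_sup]
  constructor
  · simpa [h0] using tendsto_pure_nhds (mixG c) 0
  · have h1 : Tendsto (fun u : ℝ => -c / (2 * u)) (𝓝[>] (0:ℝ)) atBot := by
      have hinv : Tendsto (fun u : ℝ => u⁻¹) (𝓝[>] (0:ℝ)) atTop := tendsto_inv_nhdsGT_zero
      have := hinv.const_mul_atTop (by positivity : (0:ℝ) < c / 2)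
      have h2 : Tendsto (fun u : ℝ => (c / 2) * u⁻¹) (𝓝[>] (0:ℝ)) atTop := this
      have := tendsto_neg_atBot_iff.mpr h2
      refine this.congr fun u => ?_
      field_simp
    have h2 := Real.tendsto_exp_atBot.comp h1
    have h3 : Tendsto (fun u : ℝ => (2 / c) * Real.exp (-c / (2 * u))) (𝓝[>] (0:ℝ)) (𝓝 0) := by
      simpa using h2.const_mul (2 / c)
    refine h3.congr' ?_
    filter_upwards [self_mem_nhdsWithin] with u hu
    simp [mixG, not_le.mpr (mem_Ioi.mp hu)]

private lemma mixIntegrable {c : ℝ} (hc : 0 < c) :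
    IntegrableOn (fun u : ℝ => (u ^ 2)⁻¹ * Real.exp (-c / (2 * u))) (Ioi 0) :=
  integrableOn_Ioi_deriv_of_nonneg (mixG_cont hc) (fun u hu => mixG_deriv hc hu)
    (fun u hu => by positivity) (mixG_tendsto hc)

private lemma mixIntegral {c : ℝ} (hc : 0 < c) :
    ∫ u in Ioi (0:ℝ), (u ^ 2)⁻¹ * Real.exp (-c / (2 * u)) = 2 / c := by
  have := integral_Ioi_of_hasDerivAt_of_nonneg (mixG_cont hc) (fun u hu => mixG_deriv hc hu)
    (fun u hu => by positivity) (mixG_tendsto hc)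
  simpa [mixG] using this

end AuxA

section AuxB
open Filter Topology Complex

private lemma neg_one_zpow_inv (n : ℤ) : ((-1 : ℂ) ^ n)⁻¹ = (-1) ^ n := by
  refine inv_eq_of_mul_eq_one_left ?_
  rw [← mul_zpow]
  norm_num

private lemma exp_pi_I_int (n : ℤ) : Complex.exp ((n : ℂ) * (-(π * Complex.I))) = (-1) ^ n := by
  rw [Complex.exp_int_mul, Complex.exp_neg, Complex.exp_pi_mul_I]
  norm_num

private lemma cosh_int (y : ℝ) (hy : y ≠ 0) (n : ℤ) :
    ∫ t in (-π:ℝ)..π,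
        Complex.exp (2 * π * Complex.I * (-n) * t / (2 * π)) * Complex.cosh (y * t)
      = (-1 : ℂ) ^ n * (2 * y * (Real.sinh (π * y) : ℝ)) / ((y:ℂ) ^ 2 + (n:ℂ) ^ 2) := by
  set c₁ : ℂ := (y : ℂ) - Complex.I * n with hc₁def
  set c₂ : ℂ := -(y : ℂ) - Complex.I * n with hc₂def
  have hc₁ : c₁ ≠ 0 := by
    intro h
    have := congrArg Complex.re h
    simp [hc₁def] at this
    exact hy this
  have hc₂ : c₂ ≠ 0 := by
    intro h
    have := congrArg Complex.re h
    simp [hc₂def] at this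
    exact hy this
  have hπ : (π : ℂ) ≠ 0 := by
    exact_mod_cast Real.pi_ne_zero
  have hden : ((y:ℂ) ^ 2 + (n:ℂ) ^ 2) ≠ 0 := by
    have h : (0:ℝ) < y ^ 2 + (n:ℝ) ^ 2 := by positivity
    have : ((y ^ 2 + (n:ℝ) ^ 2 : ℝ) : ℂ) ≠ 0 := by exact_mod_cast h.ne'
    convert this using 1
    push_cast
    ring
  have hint : ∀ t : ℝ,
      Complex.exp (2 * π * Complex.I * (-n) * t / (2 * π)) * Complex.cosh (y * t)
        = (Complex.exp (c₁ * t) + Complex.exp (c₂ * t)) / 2 := by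
    intro t
    have harg : (2 * (π:ℂ) * Complex.I * (-n) * t / (2 * π)) = -(Complex.I * n * t) := by
      field_simp
    rw [harg, Complex.cosh, ← mul_div_assoc, mul_add, ← Complex.exp_add, ← Complex.exp_add]
    congr 3
    · rw [hc₁def]; push_cast; ring
    · rw [hc₂def]; push_cast; ring
  rw [intervalIntegral.integral_congr (fun t _ => hint t)]
  have hi : ∀ c : ℂ, IntervalIntegrable (fun t : ℝ => Complex.exp (c * t)) volume (-π) π := by
    intro c
    exact (Complex.continuous_exp.comp (continuous_const.mul Complex.continuous_ofReal)).intervalIntegrable _ _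
  rw [intervalIntegral.integral_div, intervalIntegral.integral_add (hi c₁) (hi c₂),
    integral_exp_mul_complex hc₁, integral_exp_mul_complex hc₂]
  have e₁ : Complex.exp (c₁ * π) = (-1) ^ n * Complex.exp (y * π) := by
    rw [show c₁ * π = (n:ℂ) * (-(π * Complex.I)) + (y:ℂ) * π by rw [hc₁def]; ring,
      Complex.exp_add, exp_pi_I_int]
  have e₂ : Complex.exp (c₁ * ((-π : ℝ) : ℂ)) = (-1) ^ n * Complex.exp (-((y:ℂ) * π)) := by
    rw [show c₁ * ((-π : ℝ) : ℂ) = ((-n : ℤ) : ℂ) * (-(π * Complex.I)) + -((y:ℂ) * π) by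
        rw [hc₁def]; push_cast; ring,
      Complex.exp_add, exp_pi_I_int, zpow_neg, neg_one_zpow_inv]
  have e₃ : Complex.exp (c₂ * π) = (-1) ^ n * Complex.exp (-((y:ℂ) * π)) := by
    rw [show c₂ * π = (n:ℂ) * (-(π * Complex.I)) + -((y:ℂ) * π) by rw [hc₂def]; ring,
      Complex.exp_add, exp_pi_I_int]
  have e₄ : Complex.exp (c₂ * ((-π : ℝ) : ℂ)) = (-1) ^ n * Complex.exp ((y:ℂ) * π) := by
    rw [show c₂ * ((-π : ℝ) : ℂ) = ((-n : ℤ) : ℂ) * (-(π * Complex.I)) + (y:ℂ) * π by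
        rw [hc₂def]; push_cast; ring,
      Complex.exp_add, exp_pi_I_int, zpow_neg, neg_one_zpow_inv]
  rw [e₁, e₂, e₃, e₄]
  have hs : ((Real.sinh (π * y) : ℝ) : ℂ)
      = (Complex.exp ((y:ℂ) * π) - Complex.exp (-((y:ℂ) * π))) / 2 := by
    rw [Complex.ofReal_sinh, show ((π * y : ℝ) : ℂ) = (y:ℂ) * π by push_cast; ring,
      ← Complex.two_sinh]
    ring
  rw [hs]
  have h4 : c₁ * c₂ = -((y:ℂ) ^ 2 + (n:ℂ) ^ 2) := by
    rw [hc₁def, hc₂def]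
    ring_nf
    rw [Complex.I_sq]
    ring
  field_simp
  ring_nf
  have h5 : c₂ - c₁ = -2 * (y:ℂ) := by rw [hc₁def, hc₂def]; ring
  linear_combination (-2 * (y:ℂ) * (Complex.exp ((y:ℂ) * π) - Complex.exp (-((y:ℂ) * π)))) * h4
    + ((y:ℂ) ^ 2 + (n:ℂ) ^ 2) * (Complex.exp ((y:ℂ) * π) - Complex.exp (-((y:ℂ) * π))) * h5

private lemma cschSeries (y : ℝ) (hy : y ≠ 0) :
    ∑' n : ℤ, (-1 : ℝ) ^ n / ((n : ℝ) ^ 2 + y ^ 2) = π / (y * Real.sinh (π * y)) := by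
  haveI : Fact (0 < 2 * π) := ⟨by positivity⟩
  set K : ℝ := y * Real.sinh (π * y) / π with hKdef
  have hsinh : Real.sinh (π * y) ≠ 0 := by
    rw [Real.sinh_ne_zero]
    exact mul_ne_zero Real.pi_ne_zero hy
  have hK : K ≠ 0 := by
    rw [hKdef]
    exact div_ne_zero (mul_ne_zero hy hsinh) Real.pi_ne_zero
  set r : ℤ → ℝ := fun n => (-1) ^ n * K / (y ^ 2 + (n : ℝ) ^ 2) with hrdef
  have hcont : Continuous (AddCircle.liftIco (2 * π) (-π)
      (fun t : ℝ => Complex.cosh ((y : ℂ) * (t : ℂ)))) := by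
    apply AddCircle.liftIco_continuous
    · show Complex.cosh ((y:ℂ) * ((-π : ℝ):ℂ)) = Complex.cosh ((y:ℂ) * ((-π + 2*π : ℝ):ℂ))
      rw [show ((-π + 2*π : ℝ):ℂ) = ((π:ℝ):ℂ) by push_cast; ring,
        show (y:ℂ) * ((-π : ℝ):ℂ) = -((y:ℂ) * ((π:ℝ):ℂ)) by push_cast; ring, Complex.cosh_neg]
    · exact (Complex.continuous_cosh.comp
        (continuous_const.mul Complex.continuous_ofReal)).continuousOn
  set F : C(AddCircle (2 * π), ℂ) := ⟨_, hcont⟩ with hFdef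
  have hFc : ∀ n : ℤ, fourierCoeff (⇑F) n = (r n : ℂ) := by
    intro n
    have h1 : fourierCoeff (⇑F) n = fourierCoeffOn
        (lt_add_of_pos_right (-π) (Fact.out : (0:ℝ) < 2*π))
        (fun t : ℝ => Complex.cosh ((y : ℂ) * (t : ℂ))) n :=
      fourierCoeff_liftIco_eq _ n
    rw [h1, fourierCoeffOn_eq_integral]
    rw [show (-π + 2 * π - -π : ℝ) = 2 * π by ring, show (-π + 2 * π : ℝ) = π by ring]
    simp_rw [fourier_coe_apply, smul_eq_mul]
    push_cast
    have hI := cosh_int y hy n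
    rw [hI, hrdef]
    have hdr : (y ^ 2 + (n:ℝ) ^ 2 : ℝ) ≠ 0 := by positivity
    have hπc : (π:ℂ) ≠ 0 := by exact_mod_cast Real.pi_ne_zero
    have hdenC : ((y:ℂ) ^ 2 + (n:ℂ) ^ 2) ≠ 0 := by
      have : ((y ^ 2 + (n:ℝ) ^ 2 : ℝ) : ℂ) ≠ 0 := by exact_mod_cast hdr
      convert this using 1
      push_cast
      ring
    rw [Complex.real_smul, hKdef]
    push_cast
    field_simp
  have hsum : Summable r := by
    have hbase : Summable (fun n : ℤ => |K| * (1 / (n:ℝ) ^ 2)) :=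
      (summable_one_div_int_pow.mpr one_lt_two).mul_left _
    refine Summable.of_norm_bounded_eventually hbase ?_
    filter_upwards [(Set.finite_singleton (0:ℤ)).compl_mem_cofinite] with n hn
    have hn' : n ≠ 0 := hn
    have hn2 : (0:ℝ) < (n:ℝ) ^ 2 := by
      have : (n:ℝ) ≠ 0 := Int.cast_ne_zero.mpr hn'
      positivity
    have hpos : (0:ℝ) < y ^ 2 + (n:ℝ) ^ 2 := by positivity
    have habs1 : |(-1:ℝ) ^ n| = 1 := by
      rcases Int.even_or_odd n with h | h
      · rw [h.neg_one_zpow]; norm_num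
      · rw [Odd.neg_one_zpow h]; norm_num
    have habs : ‖r n‖ = |K| / (y ^ 2 + (n:ℝ) ^ 2) := by
      rw [hrdef, Real.norm_eq_abs, abs_div, abs_mul, habs1, one_mul, abs_of_pos hpos]
    rw [habs, mul_one_div]
    exact div_le_div_of_nonneg_left (abs_nonneg K) hn2 (by linarith [sq_nonneg y])
  have hsumC : Summable (fourierCoeff (⇑F)) := by
    have heq : fourierCoeff (⇑F) = fun n => (r n : ℂ) := funext hFc
    rw [heq]
    exact Complex.summable_ofReal.mpr hsum
  have h0 := has_pointwise_sum_fourier_series_of_summable hsumC (0 : AddCircle (2 * π))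
  have hF0 : F (0 : AddCircle (2 * π)) = 1 := by
    show AddCircle.liftIco (2*π) (-π) (fun t : ℝ => Complex.cosh ((y : ℂ) * (t : ℂ)))
      (((0:ℝ) : AddCircle (2*π))) = 1
    rw [AddCircle.liftIco_coe_apply
      (by constructor <;> [linarith [Real.pi_pos]; linarith [Real.pi_pos]])]
    simp
  have h1 : HasSum (fun n : ℤ => (r n : ℂ)) 1 := by
    rw [hF0] at h0
    refine h0.congr_fun fun n => ?_
    rw [hFc n, fourier_eval_zero, smul_eq_mul, mul_one]
  have h2 : HasSum r 1 := by
    rw [show (1:ℂ) = ((1:ℝ):ℂ) by norm_num] at h1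
    exact Complex.hasSum_ofReal.mp h1
  have h3 := h2.tsum_eq
  have h5 : K * ∑' n : ℤ, (-1:ℝ) ^ n / ((n:ℝ) ^ 2 + y ^ 2) = 1 := by
    rw [← tsum_mul_left]
    have heq2 : (fun n : ℤ => K * ((-1:ℝ) ^ n / ((n:ℝ) ^ 2 + y ^ 2))) = r := by
      funext n
      rw [hrdef]
      ring
    rw [heq2]
    exact h3
  rw [eq_div_iff (mul_ne_zero hy hsinh)]
  rw [hKdef, div_mul_eq_mul_div, div_eq_iff Real.pi_ne_zero] at h5
  linear_combination h5

end AuxB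

/-- The symmetric part of the Meixner Lévy density is the Gaussian mixture of the
time-change Lévy density given by the alternating theta series:
`1/(x sinh(πx/a)) = (a/(2π)) ∫_0^∞ u^{-2} e^{-x²/(2u)} Σ_{n∈ℤ} (-1)^n e^{-n²a²/(2u)} du`. -/
theorem meixner_levy_density_as_gaussian_mixture (a : ℝ) (ha : 0 < a)
    (x : ℝ) (hx : x ≠ 0) :
    1 / (x * Real.sinh (π * x / a)) =
      (a / (2 * π)) * ∫ u in Ioi (0:ℝ),
        u ^ (-2 : ℝ) * Real.exp (-x^2 / (2*u)) *
          ∑' n : ℤ, (-1 : ℝ) ^ n * Real.exp (-((n:ℝ)^2 * a^2) / (2*u)) := by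
  have hc : ∀ n : ℤ, (0:ℝ) < x ^ 2 + (n:ℝ) ^ 2 * a ^ 2 := by
    intro n
    have hx2 : (0:ℝ) < x ^ 2 := by positivity
    nlinarith [sq_nonneg ((n:ℝ) * a)]
  set G : ℤ → ℝ → ℝ := fun n u =>
    (-1 : ℝ) ^ n * ((u ^ 2)⁻¹ * Real.exp (-(x ^ 2 + (n:ℝ) ^ 2 * a ^ 2) / (2 * u))) with hGdef
  have habs1 : ∀ n : ℤ, |(-1:ℝ) ^ n| = 1 := by
    intro n
    rcases Int.even_or_odd n with h | h
    · rw [h.neg_one_zpow]; norm_num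
    · rw [Odd.neg_one_zpow h]; norm_num
  -- Step 1 : rewrite the integrand as a tsum
  have hstep1 : ∫ u in Ioi (0:ℝ),
        u ^ (-2 : ℝ) * Real.exp (-x^2 / (2*u)) *
          ∑' n : ℤ, (-1 : ℝ) ^ n * Real.exp (-((n:ℝ)^2 * a^2) / (2*u))
      = ∫ u in Ioi (0:ℝ), ∑' n : ℤ, G n u := by
    refine setIntegral_congr_fun measurableSet_Ioi fun u hu => ?_
    have hu0 : (0:ℝ) < u := hu
    have hrp : u ^ (-2 : ℝ) = (u ^ 2)⁻¹ := by
      rw [show (-2:ℝ) = -(2:ℕ) by norm_num, Real.rpow_neg hu0.le, Real.rpow_natCast]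
    rw [hrp, mul_assoc, ← tsum_mul_left, ← tsum_mul_left]
    congr 1
    funext n
    rw [hGdef]
    have hexp : -(x ^ 2 + (n:ℝ) ^ 2 * a ^ 2) / (2 * u)
        = -x ^ 2 / (2 * u) + -((n:ℝ) ^ 2 * a ^ 2) / (2 * u) := by ring
    simp only
    rw [hexp, Real.exp_add]
    ring
  -- Step 2 : swap integral and sum
  have hint : ∀ n : ℤ, Integrable (G n) (volume.restrict (Ioi 0)) := by
    intro n
    exact ((mixIntegrable (hc n)).const_mul _)
  have hnorm : ∀ n : ℤ, ∫ u in Ioi (0:ℝ), ‖G n u‖ = 2 / (x ^ 2 + (n:ℝ) ^ 2 * a ^ 2) := by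
    intro n
    rw [← mixIntegral (hc n)]
    refine setIntegral_congr_fun measurableSet_Ioi fun u hu => ?_
    have hu0 : (0:ℝ) < u := hu
    rw [hGdef]
    simp only
    rw [Real.norm_eq_abs, abs_mul, habs1 n, one_mul, abs_of_pos (by positivity)]
  have hsummable : Summable fun n : ℤ => ∫ u in Ioi (0:ℝ), ‖G n u‖ := by
    have hbase : Summable (fun n : ℤ => (2 / a ^ 2) * (1 / (n:ℝ) ^ 2)) :=
      (summable_one_div_int_pow.mpr one_lt_two).mul_left _
    refine Summable.of_norm_bounded_eventually hbase ?_
    filter_upwards [(Set.finite_singleton (0:ℤ)).compl_mem_cofinite] with n hn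
    have hn' : n ≠ 0 := hn
    have hn2 : (0:ℝ) < (n:ℝ) ^ 2 := by
      have : (n:ℝ) ≠ 0 := Int.cast_ne_zero.mpr hn'
      positivity
    rw [hnorm n, Real.norm_eq_abs, abs_of_pos (by positivity)]
    have h1 : (2 / a ^ 2) * (1 / (n:ℝ) ^ 2) = 2 / ((n:ℝ) ^ 2 * a ^ 2) := by
      field_simp
    rw [h1]
    refine div_le_div_of_nonneg_left (by norm_num) (by positivity) ?_
    nlinarith [sq_nonneg x]
  have hstep2 : ∫ u in Ioi (0:ℝ), ∑' n : ℤ, G n u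
      = ∑' n : ℤ, ∫ u in Ioi (0:ℝ), G n u :=
    (integral_tsum_of_summable_integral_norm hint hsummable).symm
  -- Step 3 : compute each integral
  have hstep3 : ∀ n : ℤ, ∫ u in Ioi (0:ℝ), G n u
      = (-1:ℝ) ^ n * (2 / (x ^ 2 + (n:ℝ) ^ 2 * a ^ 2)) := by
    intro n
    rw [hGdef]
    simp only
    rw [integral_const_mul, mixIntegral (hc n)]
  -- Step 4 : sum the series
  have hya : x / a ≠ 0 := div_ne_zero hx ha.ne'
  have hstep4 : ∑' n : ℤ, (-1:ℝ) ^ n * (2 / (x ^ 2 + (n:ℝ) ^ 2 * a ^ 2))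
      = (2 / a ^ 2) * (π / ((x / a) * Real.sinh (π * (x / a)))) := by
    rw [← cschSeries (x / a) hya, ← tsum_mul_left]
    congr 1
    funext n
    have h2 : (n:ℝ) ^ 2 + (x / a) ^ 2 = (x ^ 2 + (n:ℝ) ^ 2 * a ^ 2) / a ^ 2 := by
      field_simp
      ring
    rw [h2, div_div_eq_mul_div]
    have hcn := (hc n).ne'
    field_simp
  rw [hstep1, hstep2, tsum_congr hstep3, hstep4]
  have hS : Real.sinh (π * x / a) ≠ 0 := by
    rw [Real.sinh_ne_zero]
    have : π * x / a ≠ 0 := by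
      apply div_ne_zero (mul_ne_zero Real.pi_ne_zero hx) ha.ne'
    exact this
  rw [show π * (x / a) = π * x / a by ring]
  field_simp
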